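/- Fix p ∈ ℕ, f ∈ C_p and h > 0, and define the Steklov mean f_h(x) = (4/h²) ∫_0^{h/2} ∫_0^{h/2} [2f(x+s+t) − f(x+2(s+t))] ds dt for x ≥ 0. Then ‖f − f_h‖_p ≤ ω_p²(f; h). -/

import Mathlib

open MeasureTheory Set

/-- The Gamma-type operator `M_{n,k}(f;x)`. -/
noncomputable def Mnk (n k : ℕ) (f : ℝ → ℝ) (x : ℝ) : ℝ :=
  (((2 * n - k + 1).factorial : ℝ) * x ^ (n + 1) /
      ((n.factorial : ℝ) * ((n - k).factorial : ℝ))) *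
    ∫ t in Ioi (0 : ℝ), t ^ (n - k) / (x + t) ^ (2 * n - k + 2) * f t

/-- The polynomial weight: `w_0 = 1`, `w_p(x) = 1/(1+x^p)` for `p ≥ 1`. -/
noncomputable def wp (p : ℕ) (x : ℝ) : ℝ := if p = 0 then 1 else 1 / (1 + x ^ p)

/-- The weighted sup-norm `‖f‖_p = sup_{x ≥ 0} w_p(x)|f(x)|`. -/
noncomputable def pNorm (p : ℕ) (f : ℝ → ℝ) : ℝ :=
  ⨆ x : {x : ℝ // 0 ≤ x}, wp p x.val * |f x.val|

/-- Second symmetric difference `Δ_h² f`. -/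
def Delta2 (h : ℝ) (f : ℝ → ℝ) (x : ℝ) : ℝ := f (x + 2 * h) - 2 * f (x + h) + f x

/-- Second weighted modulus of smoothness `ω_p²(f;δ)`. -/
noncomputable def omega2 (p : ℕ) (f : ℝ → ℝ) (δ : ℝ) : ℝ :=
  ⨆ h : {h : ℝ // 0 < h ∧ h ≤ δ}, pNorm p (Delta2 h.val f)

/-- First weighted modulus `ω_p¹(f;δ)`. -/
noncomputable def omega1 (p : ℕ) (f : ℝ → ℝ) (δ : ℝ) : ℝ :=
  sSup {y : ℝ | ∃ t x : ℝ, 0 ≤ t ∧ 0 ≤ x ∧ |t - x| ≤ δ ∧ y = wp p x * |f t - f x|}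

/-- Membership in the weighted space `C_p`: `w_p·f` is bounded and uniformly
continuous on `[0,∞)`. -/
def CpMem (p : ℕ) (f : ℝ → ℝ) : Prop :=
  (∃ B : ℝ, ∀ x ≥ (0 : ℝ), |wp p x * f x| ≤ B) ∧
    UniformContinuousOn (fun x => wp p x * f x) (Ici 0)

/-- Steklov mean `f_h`. -/
noncomputable def steklov (f : ℝ → ℝ) (h : ℝ) (x : ℝ) : ℝ :=
  4 / h ^ 2 *
    ∫ s in (0 : ℝ)..(h / 2), ∫ t in (0 : ℝ)..(h / 2),
      (2 * f (x + s + t) - f (x + 2 * (s + t)))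

lemma wp_pos' (p : ℕ) (x : ℝ) (hx : 0 ≤ x) : 0 < wp p x := by
  unfold wp; split_ifs
  · norm_num
  · have : (0:ℝ) < 1 + x ^ p := by positivity
    positivity

lemma wp_ratio' (p : ℕ) (h x a : ℝ) (hx : 0 ≤ x) (ha : 0 ≤ a) (hah : a ≤ 2 * h) :
    wp p x ≤ (1 + 2 ^ p + 2 ^ p * (2 * h) ^ p) * wp p (x + a) := by
  have h2h : (0:ℝ) ≤ 2 * h := le_trans ha hah
  have key : 1 + (x + a) ^ p ≤ (1 + 2 ^ p + 2 ^ p * (2 * h) ^ p) * (1 + x ^ p) := by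
    have h1 : (x + a) ^ p ≤ (x + 2 * h) ^ p := by
      apply pow_le_pow_left₀ (by linarith) (by linarith)
    have h2 : (x + 2 * h) ^ p ≤ (2 * max x (2 * h)) ^ p := by
      apply pow_le_pow_left₀ (by linarith)
      rcases le_total x (2 * h) with hc | hc
      · rw [max_eq_right hc]; linarith
      · rw [max_eq_left hc]; linarith
    have h3 : (2 * max x (2 * h)) ^ p = 2 ^ p * (max x (2 * h)) ^ p := mul_pow 2 _ p
    have h4 : (max x (2 * h)) ^ p ≤ x ^ p + (2 * h) ^ p := by
      rcases le_total x (2 * h) with hc | hc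
      · rw [max_eq_right hc]; nlinarith [pow_nonneg hx p]
      · rw [max_eq_left hc]; nlinarith [pow_nonneg h2h p]
    have h5 : (0:ℝ) ≤ x ^ p := pow_nonneg hx p
    have h6 : (0:ℝ) ≤ (2 * h) ^ p := pow_nonneg h2h p
    have h7 : (0:ℝ) < 2 ^ p := by positivity
    nlinarith [mul_le_mul_of_nonneg_left h4 (le_of_lt h7),
      mul_nonneg (mul_nonneg h7.le h6) h5, mul_nonneg h7.le h5]
  unfold wp
  split_ifs with hp
  · simp [hp]
  · rw [div_le_iff₀ (by positivity), mul_assoc, one_div,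
      mul_comm ((1 + (x + a) ^ p)⁻¹) (1 + x ^ p), ← mul_assoc, ← div_eq_mul_inv,
      le_div_iff₀ (by positivity : (0:ℝ) < 1 + (x + a) ^ p), one_mul]
    exact key

lemma cpExt (p : ℕ) (f : ℝ → ℝ)
    (hUC : UniformContinuousOn (fun x => wp p x * f x) (Ici 0)) :
    ∃ F : ℝ → ℝ, Continuous F ∧ ∀ y : ℝ, 0 ≤ y → F y = f y := by
  set G : ℝ → ℝ := fun y => wp p y * f y with hGdef
  have hG : ContinuousOn G (Ici 0) := hUC.continuousOn
  refine ⟨fun y => G (max y 0) * (if p = 0 then 1 else 1 + (max y 0) ^ p), ?_, ?_⟩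
  · have hmax : Continuous fun y : ℝ => max y 0 := continuous_id.max continuous_const
    have h1 : Continuous fun y => G (max y 0) :=
      hG.comp_continuous hmax fun y => mem_Ici.mpr (le_max_right _ _)
    apply h1.mul
    split_ifs
    · exact continuous_const
    · fun_prop
  · intro y hy
    simp only []
    rw [max_eq_left hy]
    by_cases hp : p = 0
    · simp [hGdef, wp, hp]
    · have hpos : (0:ℝ) < 1 + y ^ p := by positivity
      simp only [hGdef, wp, if_neg hp]
      field_simp

lemma steklov_identity (F : ℝ → ℝ) (hF : Continuous F) (h : ℝ) (hh : 0 < h) (x : ℝ) :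
    F x - steklov F h x
      = 4 / h ^ 2 * ∫ s in (0 : ℝ)..(h / 2), ∫ t in (0 : ℝ)..(h / 2), Delta2 (s + t) F x := by
  have hint : ∀ s : ℝ, IntervalIntegrable (fun t => Delta2 (s + t) F x) volume 0 (h / 2) := by
    intro s
    apply Continuous.intervalIntegrable
    unfold Delta2; fun_prop
  have hcont : Continuous fun s : ℝ => ∫ t in (0 : ℝ)..(h / 2), Delta2 (s + t) F x := by
    apply intervalIntegral.continuous_parametric_intervalIntegral_of_continuous'
    unfold Function.uncurry Delta2
    fun_prop
  have h1 : ∀ s : ℝ, (∫ t in (0 : ℝ)..(h / 2), (2 * F (x + s + t) - F (x + 2 * (s + t))))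
      = (h / 2) * F x - ∫ t in (0 : ℝ)..(h / 2), Delta2 (s + t) F x := by
    intro s
    have e : (fun t => 2 * F (x + s + t) - F (x + 2 * (s + t)))
        = fun t => F x - Delta2 (s + t) F x := by
      funext t; simp only [Delta2]; ring_nf
    rw [show (∫ t in (0 : ℝ)..(h / 2), (2 * F (x + s + t) - F (x + 2 * (s + t))))
        = ∫ t in (0 : ℝ)..(h / 2), (F x - Delta2 (s + t) F x) from by rw [e]]
    rw [intervalIntegral.integral_sub intervalIntegrable_const (hint s)]
    simp
  have h2 : (∫ s in (0 : ℝ)..(h / 2), ∫ t in (0 : ℝ)..(h / 2),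
      (2 * F (x + s + t) - F (x + 2 * (s + t))))
      = (h / 2) * ((h / 2) * F x)
        - ∫ s in (0 : ℝ)..(h / 2), ∫ t in (0 : ℝ)..(h / 2), Delta2 (s + t) F x := by
    rw [show (fun s => ∫ t in (0 : ℝ)..(h / 2), (2 * F (x + s + t) - F (x + 2 * (s + t))))
        = fun s => (h / 2) * F x - ∫ t in (0 : ℝ)..(h / 2), Delta2 (s + t) F x from
        funext h1]
    rw [intervalIntegral.integral_sub intervalIntegrable_const
      (hcont.intervalIntegrable _ _)]
    simp
  unfold steklov
  rw [h2]
  have : h ^ 2 ≠ 0 := by positivity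
  field_simp
  ring

/-- The Steklov mean satisfies `‖f − f_h‖_p ≤ ω_p²(f;h)`. -/
theorem steklov_approx (p : ℕ) (f : ℝ → ℝ) (hf : CpMem p f) (h : ℝ) (hh : 0 < h) :
    pNorm p (fun x => f x - steklov f h x) ≤ omega2 p f h := by
  haveI : Nonempty {x : ℝ // (0:ℝ) ≤ x} := ⟨⟨0, le_rfl⟩⟩
  obtain ⟨⟨B, hB⟩, hUC⟩ := hf
  obtain ⟨F, hFc, hFf⟩ := cpExt p f hUC
  set K : ℝ := 1 + 2 ^ p + 2 ^ p * (2 * h) ^ p with hKdef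
  have hK0 : 0 < K := by positivity
  have hshift : ∀ x a : ℝ, 0 ≤ x → 0 ≤ a → a ≤ 2 * h → wp p x * |f (x + a)| ≤ K * B := by
    intro x a hx ha hah
    have h1 := wp_ratio' p h x a hx ha hah
    have h2 : wp p x * |f (x + a)| ≤ (K * wp p (x + a)) * |f (x + a)| :=
      mul_le_mul_of_nonneg_right h1 (abs_nonneg _)
    have h3 : (K * wp p (x + a)) * |f (x + a)| = K * |wp p (x + a) * f (x + a)| := by
      rw [abs_mul, abs_of_nonneg (wp_pos' p (x + a) (by linarith)).le]; ring
    calc wp p x * |f (x + a)| ≤ K * |wp p (x + a) * f (x + a)| := by rw [← h3]; exact h2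
    _ ≤ K * B := mul_le_mul_of_nonneg_left (hB _ (by linarith)) hK0.le
  have hDelta : ∀ u x : ℝ, 0 ≤ u → u ≤ h → 0 ≤ x →
      wp p x * |Delta2 u f x| ≤ 4 * (K * B) := by
    intro u x hu huh hx
    have habs : |Delta2 u f x| ≤ |f (x + 2 * u)| + 2 * |f (x + u)| + |f x| := by
      unfold Delta2
      calc |f (x + 2 * u) - 2 * f (x + u) + f x|
          ≤ |f (x + 2 * u) - 2 * f (x + u)| + |f x| := abs_add_le _ _
        _ ≤ |f (x + 2 * u)| + |2 * f (x + u)| + |f x| := by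
            linarith [abs_sub (f (x + 2 * u)) (2 * f (x + u))]
        _ = |f (x + 2 * u)| + 2 * |f (x + u)| + |f x| := by
            rw [abs_mul]; norm_num
    have hwp0 : 0 ≤ wp p x := (wp_pos' p x hx).le
    have b1 := hshift x (2 * u) hx (by linarith) (by linarith)
    have b2 := hshift x u hx hu (by linarith)
    have b3 := hshift x 0 hx le_rfl (by linarith)
    rw [add_zero] at b3
    nlinarith [mul_le_mul_of_nonneg_left habs hwp0]
  have hBdd : ∀ u : ℝ, 0 ≤ u → u ≤ h → pNorm p (Delta2 u f) ≤ 4 * (K * B) := by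
    intro u h1 h2
    apply ciSup_le
    rintro ⟨x, hx⟩
    exact hDelta u x h1 h2 hx
  set C := omega2 p f h with hCdef
  have homega : ∀ u : ℝ, 0 < u → u ≤ h → pNorm p (Delta2 u f) ≤ C := by
    intro u h1 h2
    have hbd : BddAbove (Set.range fun h' : {h' : ℝ // 0 < h' ∧ h' ≤ h} =>
        pNorm p (Delta2 h'.val f)) := by
      refine ⟨4 * (K * B), ?_⟩
      rintro y ⟨⟨u', hu1, hu2⟩, rfl⟩
      exact hBdd u' hu1.le hu2
    exact le_ciSup hbd (⟨u, h1, h2⟩ : {h' : ℝ // 0 < h' ∧ h' ≤ h})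
  have hpoint : ∀ u x : ℝ, 0 < u → u ≤ h → 0 ≤ x → wp p x * |Delta2 u f x| ≤ C := by
    intro u x h1 h2 hx
    refine le_trans ?_ (homega u h1 h2)
    have hbd : BddAbove (Set.range fun x' : {x' : ℝ // 0 ≤ x'} =>
        wp p x'.val * |Delta2 u f x'.val|) := by
      refine ⟨4 * (K * B), ?_⟩
      rintro y ⟨⟨x', hx'⟩, rfl⟩
      exact hDelta u x' h1.le h2 hx'
    exact le_ciSup hbd (⟨x, hx⟩ : {x' : ℝ // 0 ≤ x'})
  refine ciSup_le ?_
  rintro ⟨x, hx⟩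
  show wp p x * |f x - steklov f h x| ≤ C
  have hsf : steklov f h x = steklov F h x := by
    unfold steklov
    congr 1
    apply intervalIntegral.integral_congr
    intro s hs
    rw [uIcc_of_le (by linarith : (0:ℝ) ≤ h / 2)] at hs
    apply intervalIntegral.integral_congr
    intro t ht
    rw [uIcc_of_le (by linarith : (0:ℝ) ≤ h / 2)] at ht
    have h1 : 0 ≤ x + s + t := by linarith [hs.1, ht.1]
    have h2 : 0 ≤ x + 2 * (s + t) := by linarith [hs.1, ht.1]
    show 2 * f (x + s + t) - f (x + 2 * (s + t)) = 2 * F (x + s + t) - F (x + 2 * (s + t))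
    rw [hFf _ h1, hFf _ h2]
  rw [hsf, ← hFf x hx, steklov_identity F hFc h hh x]
  have hwx := wp_pos' p x hx
  have hbound : ‖∫ s in (0 : ℝ)..(h / 2), ∫ t in (0 : ℝ)..(h / 2), Delta2 (s + t) F x‖
      ≤ (C / wp p x * |h / 2 - 0|) * |h / 2 - 0| := by
    apply intervalIntegral.norm_integral_le_of_norm_le_const
    intro s hs
    rw [uIoc_of_le (by linarith : (0:ℝ) ≤ h / 2)] at hs
    apply intervalIntegral.norm_integral_le_of_norm_le_const
    intro t ht
    rw [uIoc_of_le (by linarith : (0:ℝ) ≤ h / 2)] at ht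
    have hu0 : 0 < s + t := by linarith [hs.1, ht.1]
    have huh : s + t ≤ h := by linarith [hs.2, ht.2]
    have heq : Delta2 (s + t) F x = Delta2 (s + t) f x := by
      unfold Delta2
      rw [hFf _ (by linarith), hFf _ (by linarith), hFf x hx]
    rw [Real.norm_eq_abs, heq, le_div_iff₀ hwx, mul_comm]
    exact hpoint (s + t) x hu0 huh hx
  rw [Real.norm_eq_abs, sub_zero, abs_of_pos (by linarith : (0:ℝ) < h / 2)] at hbound
  have habs2 : |4 / h ^ 2 * ∫ s in (0 : ℝ)..(h / 2), ∫ t in (0 : ℝ)..(h / 2),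
      Delta2 (s + t) F x| = 4 / h ^ 2 * |∫ s in (0 : ℝ)..(h / 2), ∫ t in (0 : ℝ)..(h / 2),
      Delta2 (s + t) F x| := by
    rw [abs_mul, abs_of_pos (by positivity : (0:ℝ) < 4 / h ^ 2)]
  rw [habs2]
  have hfinal : wp p x * (4 / h ^ 2 * |∫ s in (0 : ℝ)..(h / 2), ∫ t in (0 : ℝ)..(h / 2),
      Delta2 (s + t) F x|) ≤ wp p x * (4 / h ^ 2 * ((C / wp p x * (h / 2)) * (h / 2))) := by
    apply mul_le_mul_of_nonneg_left _ hwx.le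
    apply mul_le_mul_of_nonneg_left hbound (by positivity)
  refine le_trans hfinal (le_of_eq ?_)
  have hne : wp p x ≠ 0 := hwx.ne'
  have hne2 : h ≠ 0 := hh.ne'
  field_simp
  ring
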